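/- Let A be a measurable subset of the Euclidean unit ball B₂^d whose center of gravity is contained in some cap of B₂^d of height Δ ≤ 1. Then there exists a cap C of B₂^d of height 2Δ such that 2·vol_d(C ∩ A) ≥ vol_d(A). -/

import Mathlib

open MeasureTheory RealInnerProductSpace

theorem cap_captures_half_of_set (d : ℕ) (hd : 1 ≤ d)
    (A : Set (EuclideanSpace ℝ (Fin d))) (hA : MeasurableSet A)
    (hAball : A ⊆ Metric.closedBall 0 1) (hA0 : volume A ≠ 0)
    (Δ : ℝ) (hΔ : Δ ≤ 1)
    (ξ : EuclideanSpace ℝ (Fin d)) (hξ : ‖ξ‖ = 1)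
    (hcg : 1 - Δ ≤ ⟪(volume A).toReal⁻¹ • ∫ z in A, z, ξ⟫) :
    ∃ η : EuclideanSpace ℝ (Fin d), ‖η‖ = 1 ∧
      volume A ≤
        2 * volume ((Metric.closedBall 0 1 ∩ {z | 1 - 2 * Δ ≤ ⟪z, η⟫}) ∩ A) := by
  refine ⟨ξ, hξ, ?_⟩
  set f : EuclideanSpace ℝ (Fin d) → ℝ := fun z => ⟪z, ξ⟫ with hf
  have hfc : Continuous f := continuous_id.inner continuous_const
  -- finiteness of volume A
  have hAfin : volume A < ⊤ :=
    lt_of_le_of_lt (measure_mono hAball) (measure_closedBall_lt_top)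
  have ha : 0 < (volume A).toReal := ENNReal.toReal_pos hA0 hAfin.ne
  set a := (volume A).toReal
  -- integrability
  have hint_id : IntegrableOn (fun z : EuclideanSpace ℝ (Fin d) => z) A volume :=
    (continuous_id.continuousOn.integrableOn_compact (isCompact_closedBall 0 1)).mono_set hAball
  have hint_f : IntegrableOn f A volume :=
    (hfc.continuousOn.integrableOn_compact (isCompact_closedBall 0 1)).mono_set hAball
  -- rewrite the center of gravity condition
  have hI : ⟪(∫ z in A, z), ξ⟫ = ∫ z in A, f z := by
    rw [real_inner_comm]
    calc ⟪ξ, ∫ z in A, z⟫ = (innerSL ℝ ξ) (∫ z in A, z) := rfl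
      _ = ∫ z in A, (innerSL ℝ ξ) z := ((innerSL ℝ ξ).integral_comp_comm hint_id).symm
      _ = ∫ z in A, f z := integral_congr_ae (.of_forall fun z => by
          simpa using real_inner_comm z ξ)
  have hcg' : (1 - Δ) * a ≤ ∫ z in A, f z := by
    rw [real_inner_smul_left, hI] at hcg
    have h := mul_le_mul_of_nonneg_left hcg ha.le
    rw [mul_comm] at h
    calc (1 - Δ) * a ≤ (a⁻¹ * ∫ z in A, f z) * a := by
          exact mul_le_mul_of_nonneg_right hcg ha.le
      _ = ∫ z in A, f z := by field_simp
  -- pointwise bound f ≤ 1 on A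
  have hfle : ∀ z ∈ A, f z ≤ 1 := fun z hz => by
    calc f z ≤ ‖z‖ * ‖ξ‖ := real_inner_le_norm z ξ
      _ ≤ 1 := by
        rw [hξ, mul_one]
        simpa [Metric.mem_closedBall, dist_eq_norm] using hAball hz
  have hfabs : ∀ z ∈ A, ‖f z‖ ≤ 1 := fun z hz => by
    rw [Real.norm_eq_abs, abs_le]
    constructor
    · have := real_inner_le_norm z (-ξ)
      have h2 : ‖z‖ * ‖-ξ‖ ≤ 1 := by
        rw [norm_neg, hξ, mul_one]
        simpa [Metric.mem_closedBall, dist_eq_norm] using hAball hz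
      have h3 : ⟪z, -ξ⟫ = -f z := by simp [hf, inner_neg_right]
      linarith [this.trans h2, h3 ▸ this.trans h2]
    · exact hfle z hz
  set C : Set (EuclideanSpace ℝ (Fin d)) := {z | 1 - 2 * Δ ≤ f z} with hC
  have hCm : MeasurableSet C := measurableSet_le measurable_const hfc.measurable
  -- target set equals A ∩ C
  have hset : (Metric.closedBall (0 : EuclideanSpace ℝ (Fin d)) 1 ∩ C) ∩ A = A ∩ C := by
    ext z
    constructor
    · rintro ⟨⟨_, hzC⟩, hzA⟩; exact ⟨hzA, hzC⟩
    · rintro ⟨hzA, hzC⟩; exact ⟨⟨hAball hzA, hzC⟩, hzA⟩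
  rw [hset]
  set S := A ∩ C
  set T := A \ C
  have hSfin : volume S < ⊤ := lt_of_le_of_lt (measure_mono Set.inter_subset_left) hAfin
  have hTfin : volume T < ⊤ := lt_of_le_of_lt (measure_mono Set.diff_subset) hAfin
  set s := (volume S).toReal
  set t := (volume T).toReal
  have hst : s + t = a := by
    have h := measure_inter_add_diff (μ := volume) A hCm
    show (volume S).toReal + (volume T).toReal = (volume A).toReal
    rw [← h, ENNReal.toReal_add hSfin.ne hTfin.ne]
  have hsplit : (∫ z in S, f z) + ∫ z in T, f z = ∫ z in A, f z :=
    integral_inter_add_diff hCm hint_f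
  rcases le_or_gt Δ 0 with hΔ0 | hΔ0
  · -- degenerate case: Δ ≤ 0 forces Δ = 0 and f = 1 a.e. on A
    set g : EuclideanSpace ℝ (Fin d) → ℝ := fun z => 1 - f z with hg
    have hint_g : IntegrableOn g A volume := (integrableOn_const hAfin.ne).sub hint_f
    have hg_nonneg : 0 ≤ᵐ[volume.restrict A] g := by
      rw [Filter.EventuallyLE, ae_restrict_iff' hA]
      exact Filter.Eventually.of_forall fun z hz => by
        simp only [hg, Pi.zero_apply, sub_nonneg]; exact hfle z hz
    have hgint : ∫ z in A, g z = a - ∫ z in A, f z := by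
      rw [integral_sub (integrableOn_const (C := (1:ℝ)) hAfin.ne) hint_f]
      simp [Measure.restrict_apply_univ, Measure.real, a]
    have hgle : ∫ z in A, g z ≤ Δ * a := by rw [hgint]; nlinarith [hcg']
    have hgge : 0 ≤ ∫ z in A, g z := integral_nonneg_of_ae hg_nonneg
    have hΔ0' : Δ = 0 := by nlinarith
    have hgzero : ∫ z in A, g z = 0 := le_antisymm (by nlinarith) hgge
    have hae : g =ᵐ[volume.restrict A] 0 :=
      (integral_eq_zero_iff_of_nonneg_ae hg_nonneg hint_g).1 hgzero
    -- then T is null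
    have hgc : Continuous g := continuous_const.sub hfc
    have hTnull : volume T = 0 := by
      have hmg : MeasurableSet {z | g z ≠ 0} :=
        (measurableSet_eq_fun hgc.measurable measurable_const).compl
      have h2 : (volume.restrict A) {z | g z ≠ 0} = 0 := by
        have h3 := hae
        rw [Filter.EventuallyEq, ae_iff] at h3
        simpa using h3
      have h1 : volume ({z | g z ≠ 0} ∩ A) = 0 := by
        rwa [Measure.restrict_apply hmg] at h2
      refine measure_mono_null ?_ h1
      rintro z ⟨hzA, hzC⟩
      refine ⟨?_, hzA⟩
      have hlt : f z < 1 - 2 * Δ := by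
        by_contra h
        exact hzC (by simpa [hC] using not_lt.1 h)
      simp only [hg, Set.mem_setOf_eq]
      intro h
      rw [sub_eq_zero] at h
      rw [hΔ0'] at hlt
      linarith [h, hlt]
    have hSA : volume S = volume A := by
      rw [← measure_inter_add_diff (μ := volume) A hCm, hTnull, add_zero]
    calc volume A = volume S := hSA.symm
      _ ≤ 2 * volume S := le_mul_of_one_le_left zero_le one_le_two
  · -- main case: Δ > 0, Markov argument
    have hIS : ∫ z in S, f z ≤ s := by
      have hb := norm_setIntegral_le_of_norm_le_const (μ := volume) (s := S) hSfin
        (fun z hz => hfabs z hz.1)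
      rw [one_mul, Real.norm_eq_abs] at hb
      exact (le_abs_self _).trans hb
    have hIT : ∫ z in T, f z ≤ (1 - 2 * Δ) * t := by
      have h1 : ∫ z in T, f z ≤ ∫ _ in T, (1 - 2 * Δ) :=
        setIntegral_mono_on (hint_f.mono_set Set.diff_subset)
          (integrableOn_const hTfin.ne) (hA.diff hCm)
          (fun z hz => le_of_lt (not_le.1 hz.2))
      rw [setIntegral_const, smul_eq_mul, mul_comm] at h1
      exact h1
    have hkey : a ≤ 2 * s := by nlinarith [hcg', hsplit ▸ add_le_add hIS hIT]
    rw [← ENNReal.toReal_le_toReal hAfin.ne (by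
      exact ENNReal.mul_ne_top (by norm_num) hSfin.ne)]
    rw [ENNReal.toReal_mul]
    simpa using hkey
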